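/- Let n ≥ 1 and let x₁ ≤ x₂ ≤ ⋯ ≤ x_{3n} be a nondecreasing 3n-tuple of real numbers. For every partition of the index set {1, …, 3n} into n pairwise disjoint 3-element subsets S₁, …, S_n, the partition into consecutive triples is minimal: ∑_{m=1}^{n} A(x_{3m−2}, x_{3m−1}, x_{3m}) ≤ ∑_{m=1}^{n} A(x_{S_m}), where A(x_S) denotes the distance within the triple of values indexed by S. -/

import Mathlib

/-- The distance within the tuple of values indexed by a finite index set `S`:
the sum of `|x j - x i|` over all pairs `i < j` in `S`. -/
def distWithin {m : ℕ} (x : Fin m → ℝ) (S : Finset (Fin m)) : ℝ :=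
  ∑ i ∈ S, ∑ j ∈ S.filter (fun j => i < j), |x j - x i|

noncomputable def gap {N : ℕ} (x : Fin N → ℝ) (k : ℕ) : ℝ :=
  if h : k + 1 < N then x ⟨k+1, h⟩ - x ⟨k, Nat.lt_of_succ_lt h⟩ else 0

lemma gap_nonneg {N : ℕ} {x : Fin N → ℝ} (hx : Monotone x) (k : ℕ) :
    0 ≤ gap x k := by
  unfold gap
  split
  · exact sub_nonneg.2 (hx (by simp [Fin.le_def]))
  · exact le_refl _

lemma sub_eq_sum_gap {N : ℕ} (x : Fin N → ℝ) (i j : Fin N) (hij : i ≤ j) :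
    x j - x i = ∑ k ∈ Finset.Ico i.val j.val, gap x k := by
  set f : ℕ → ℝ := fun k => if h : k < N then x ⟨k, h⟩ else 0 with hf
  have h1 : ∑ k ∈ Finset.Ico i.val j.val, gap x k
      = ∑ k ∈ Finset.Ico i.val j.val, (f (k+1) - f k) := by
    refine Finset.sum_congr rfl fun k hk => ?_
    rw [Finset.mem_Ico] at hk
    have hk1 : k + 1 < N := by have := j.isLt; omega
    have hk0 : k < N := by omega
    simp [gap, hf, hk1, hk0]
  rw [h1, Finset.sum_Ico_eq_sub _ (by exact_mod_cast hij),
    Finset.sum_range_sub f, Finset.sum_range_sub f]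
  have hi : i.val < N := i.isLt
  have hj : j.val < N := j.isLt
  simp [hf, hi, hj]

lemma abs_eq_ind_sum {N : ℕ} (x : Fin N → ℝ) (hx : Monotone x) (i j : Fin N)
    (hij : i < j) :
    |x j - x i| = ∑ k ∈ Finset.range N, (if i.val ≤ k ∧ k < j.val then gap x k else 0) := by
  have h1 : |x j - x i| = x j - x i := abs_of_nonneg (sub_nonneg.2 (hx hij.le))
  rw [h1, sub_eq_sum_gap x i j hij.le, ← Finset.sum_filter]
  congr 1
  ext k
  simp only [Finset.mem_Ico, Finset.mem_filter, Finset.mem_range]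
  have := j.isLt
  omega

lemma distWithin_eq {N : ℕ} (x : Fin N → ℝ) (hx : Monotone x) (S : Finset (Fin N)) :
    distWithin x S = ∑ k ∈ Finset.range N,
      (((S.filter fun i => i.val ≤ k).card * (S.filter fun j => k < j.val).card : ℕ) : ℝ)
        * gap x k := by
  unfold distWithin
  have h1 : ∀ i ∈ S, ∑ j ∈ S.filter (fun j => i < j), |x j - x i|
      = ∑ k ∈ Finset.range N, ∑ j ∈ S.filter (fun j => i < j),
          (if i.val ≤ k ∧ k < j.val then gap x k else 0) := by
    intro i _
    rw [Finset.sum_comm]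
    refine Finset.sum_congr rfl fun j hj => ?_
    rw [Finset.mem_filter] at hj
    exact abs_eq_ind_sum x hx i j hj.2
  rw [Finset.sum_congr rfl h1, Finset.sum_comm]
  refine Finset.sum_congr rfl fun k _ => ?_
  have h2 : ∀ i ∈ S, ∑ j ∈ S.filter (fun j => i < j),
      (if i.val ≤ k ∧ k < j.val then gap x k else 0)
      = (if i.val ≤ k then ((S.filter fun j => k < j.val).card : ℝ) * gap x k else 0) := by
    intro i _
    by_cases h : i.val ≤ k
    · simp only [h, true_and, if_true]
      have h3 : (S.filter (fun j => i < j)).filter (fun j => k < j.val)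
          = S.filter (fun j => k < j.val) := by
        rw [Finset.filter_filter]
        refine Finset.filter_congr fun j _ => ?_
        constructor
        · exact fun hh => hh.2
        · intro hh
          exact ⟨by rw [Fin.lt_def]; omega, hh⟩
      rw [← Finset.sum_filter, h3, Finset.sum_const, nsmul_eq_mul]
    · simp [h]
  rw [Finset.sum_congr rfl h2, ← Finset.sum_filter, Finset.sum_const, nsmul_eq_mul]
  push_cast
  ring

lemma partition_filter_card {N n : ℕ} (S : Fin n → Finset (Fin N))
    (hdisj : Pairwise fun a b => Disjoint (S a) (S b))
    (hcover : ∀ p : Fin N, ∃ m, p ∈ S m)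
    (P : Fin N → Prop) [DecidablePred P] :
    ∑ m : Fin n, ((S m).filter P).card = (Finset.univ.filter P).card := by
  have h1 : Finset.univ.filter P = Finset.univ.biUnion (fun m => (S m).filter P) := by
    ext p
    simp only [Finset.mem_filter, Finset.mem_univ, true_and, Finset.mem_biUnion]
    constructor
    · intro hp
      obtain ⟨m, hm⟩ := hcover p
      exact ⟨m, hm, hp⟩
    · rintro ⟨m, _, hp⟩
      exact hp
  rw [h1, Finset.card_biUnion]
  intro a _ b _ hab
  exact Finset.disjoint_filter_filter (hdisj hab)

lemma card_filter_le {N k : ℕ} (hk : k < N) :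
    (Finset.univ.filter fun i : Fin N => i.val ≤ k).card = k + 1 := by
  have h : (Finset.univ.filter fun i : Fin N => i.val ≤ k)
      = Finset.univ.map ⟨Fin.castLE (show k + 1 ≤ N by omega), Fin.castLE_injective _⟩ := by
    ext i
    simp only [Finset.mem_filter, Finset.mem_univ, true_and, Finset.mem_map,
      Function.Embedding.coeFn_mk]
    constructor
    · intro hi
      exact ⟨⟨i.val, by omega⟩, by ext; simp⟩
    · rintro ⟨j, rfl⟩
      simpa using Nat.lt_succ_iff.1 j.isLt
  rw [h, Finset.card_map, Finset.card_univ, Fintype.card_fin]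

lemma key_cnt {n k : ℕ} (hk3 : k % 3 ≠ 2) (a : Fin n → ℕ)
    (ha3 : ∀ m, a m ≤ 3) (hsum : ∑ m, a m = k + 1) :
    2 ≤ ∑ m : Fin n, a m * (3 - a m) := by
  have hex : ∃ m, a m ≠ 0 ∧ a m ≠ 3 := by
    by_contra h
    push_neg at h
    have hdvd : (3 : ℕ) ∣ ∑ m : Fin n, a m := by
      refine Finset.dvd_sum fun m _ => ?_
      rcases eq_or_ne (a m) 0 with h0 | h0
      · simp [h0]
      · rw [h m h0]
    rw [hsum] at hdvd
    rw [Nat.dvd_iff_mod_eq_zero] at hdvd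
    omega
  obtain ⟨m, h0, h3⟩ := hex
  have h12 : a m = 1 ∨ a m = 2 := by have := ha3 m; omega
  have h2 : 2 ≤ a m * (3 - a m) := by rcases h12 with h | h <;> simp [h]
  exact le_trans h2 (Finset.single_le_sum (f := fun m => a m * (3 - a m))
    (fun m _ => Nat.zero_le _) (Finset.mem_univ m))

lemma sum_range_three (n : ℕ) (f : ℕ → ℝ) :
    ∑ k ∈ Finset.range (3 * n), f k
      = ∑ m ∈ Finset.range n, (f (3 * m) + f (3 * m + 1) + f (3 * m + 2)) := by
  induction n with
  | zero => simp
  | succ n ih =>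
    have h : 3 * (n + 1) = 3 * n + 1 + 1 + 1 := by ring
    rw [h, Finset.sum_range_succ, Finset.sum_range_succ, Finset.sum_range_succ, ih,
      Finset.sum_range_succ]
    ring

lemma gap_eq {N : ℕ} (x : Fin N → ℝ) (k : ℕ) (h : k + 1 < N) :
    gap x k = x ⟨k+1, h⟩ - x ⟨k, Nat.lt_of_succ_lt h⟩ := dif_pos h

/-- For a sorted `3n`-tuple, the partition into consecutive triples minimizes
the total distance within, over all partitions of the `3n` indices into `n`
pairwise disjoint 3-element subsets. -/
theorem consecutive_triples_min_abs (n : ℕ) (hn : 1 ≤ n) (x : Fin (3 * n) → ℝ)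
    (hx : Monotone x) (S : Fin n → Finset (Fin (3 * n)))
    (hcard : ∀ m, (S m).card = 3)
    (hdisj : Pairwise fun a b => Disjoint (S a) (S b))
    (hcover : ∀ p : Fin (3 * n), ∃ m, p ∈ S m) :
    ∑ m : Fin n,
        (|x ⟨3 * (m : ℕ) + 1, by have := m.isLt; omega⟩ -
            x ⟨3 * (m : ℕ), by have := m.isLt; omega⟩| +
          |x ⟨3 * (m : ℕ) + 2, by have := m.isLt; omega⟩ -
            x ⟨3 * (m : ℕ) + 1, by have := m.isLt; omega⟩| +
          |x ⟨3 * (m : ℕ) + 2, by have := m.isLt; omega⟩ -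
            x ⟨3 * (m : ℕ), by have := m.isLt; omega⟩|) ≤
      ∑ m : Fin n, distWithin x (S m) := by
  classical
  -- per-triple card split
  have hab : ∀ (k : ℕ) (m : Fin n),
      ((S m).filter fun i => i.val ≤ k).card
        + ((S m).filter fun j => k < j.val).card = 3 := by
    intro k m
    have h : ((S m).filter fun j => k < j.val) = (S m).filter fun j => ¬ j.val ≤ k := by
      simp [not_le]
    rw [h, Finset.card_filter_add_card_filter_not, hcard m]
  have hsum : ∀ k, k < 3 * n →
      ∑ m : Fin n, ((S m).filter fun i => i.val ≤ k).card = k + 1 := by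
    intro k hk
    rw [partition_filter_card S hdisj hcover]
    exact card_filter_le hk
  -- RHS as weighted gap sum
  have hRHS : ∑ m : Fin n, distWithin x (S m)
      = ∑ k ∈ Finset.range (3 * n),
          ((∑ m : Fin n, ((S m).filter fun i => i.val ≤ k).card
              * ((S m).filter fun j => k < j.val).card : ℕ) : ℝ) * gap x k := by
    rw [Finset.sum_congr rfl (fun m _ => distWithin_eq x hx (S m)), Finset.sum_comm]
    refine Finset.sum_congr rfl fun k _ => ?_
    rw [← Finset.sum_mul]
    push_cast
    ring
  -- LHS as weighted gap sum
  have hL1 : ∑ m : Fin n,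
        (|x ⟨3 * (m : ℕ) + 1, by have := m.isLt; omega⟩ -
            x ⟨3 * (m : ℕ), by have := m.isLt; omega⟩| +
          |x ⟨3 * (m : ℕ) + 2, by have := m.isLt; omega⟩ -
            x ⟨3 * (m : ℕ) + 1, by have := m.isLt; omega⟩| +
          |x ⟨3 * (m : ℕ) + 2, by have := m.isLt; omega⟩ -
            x ⟨3 * (m : ℕ), by have := m.isLt; omega⟩|)
      = ∑ m : Fin n, (2 * gap x (3 * (m : ℕ)) + 2 * gap x (3 * (m : ℕ) + 1)) := by
    refine Finset.sum_congr rfl fun m _ => ?_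
    have hm := m.isLt
    have h1 : 3 * (m : ℕ) + 1 < 3 * n := by omega
    have h2 : 3 * (m : ℕ) + 1 + 1 < 3 * n := by omega
    have g0 : gap x (3 * (m : ℕ)) = x ⟨3 * (m : ℕ) + 1, h1⟩
        - x ⟨3 * (m : ℕ), Nat.lt_of_succ_lt h1⟩ := gap_eq x _ h1
    have g1 : gap x (3 * (m : ℕ) + 1) = x ⟨3 * (m : ℕ) + 1 + 1, h2⟩
        - x ⟨3 * (m : ℕ) + 1, Nat.lt_of_succ_lt h2⟩ := gap_eq x _ h2
    have hxx : x ⟨3 * (m : ℕ) + 2, by omega⟩ = x ⟨3 * (m : ℕ) + 1 + 1, h2⟩ := rfl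
    have le01 : x ⟨3 * (m : ℕ), Nat.lt_of_succ_lt h1⟩ ≤ x ⟨3 * (m : ℕ) + 1, h1⟩ :=
      hx (by simp [Fin.mk_le_mk])
    have le12 : x ⟨3 * (m : ℕ) + 1, h1⟩ ≤ x ⟨3 * (m : ℕ) + 1 + 1, h2⟩ :=
      hx (by simp [Fin.mk_le_mk])
    have le02 : x ⟨3 * (m : ℕ), Nat.lt_of_succ_lt h1⟩ ≤ x ⟨3 * (m : ℕ) + 1 + 1, h2⟩ :=
      le_trans le01 le12
    rw [hxx, abs_of_nonneg (sub_nonneg.2 le01), abs_of_nonneg (sub_nonneg.2 le12),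
      abs_of_nonneg (sub_nonneg.2 le02), g0, g1]
    ring
  have hL2 : ∑ m : Fin n, (2 * gap x (3 * (m : ℕ)) + 2 * gap x (3 * (m : ℕ) + 1))
      = ∑ k ∈ Finset.range (3 * n), (if k % 3 = 2 then (0:ℝ) else 2) * gap x k := by
    rw [Fin.sum_univ_eq_sum_range (fun p => 2 * gap x (3 * p) + 2 * gap x (3 * p + 1)) n,
      sum_range_three]
    refine Finset.sum_congr rfl fun m _ => ?_
    have e0 : (3 * m) % 3 = 0 := by omega
    have e1 : (3 * m + 1) % 3 = 1 := by omega
    have e2 : (3 * m + 2) % 3 = 2 := by omega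
    rw [e0, e1, e2]
    norm_num
  rw [hL1, hL2, hRHS]
  refine Finset.sum_le_sum fun k hk => ?_
  rw [Finset.mem_range] at hk
  by_cases h3 : k % 3 = 2
  · rw [if_pos h3, zero_mul]
    exact mul_nonneg (Nat.cast_nonneg _) (gap_nonneg hx k)
  · rw [if_neg h3]
    refine mul_le_mul_of_nonneg_right ?_ (gap_nonneg hx k)
    have hkey : 2 ≤ ∑ m : Fin n, ((S m).filter fun i => i.val ≤ k).card
        * ((S m).filter fun j => k < j.val).card := by
      have hb : ∀ m : Fin n, ((S m).filter fun j => k < j.val).card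
          = 3 - ((S m).filter fun i => i.val ≤ k).card := by
        intro m; have := hab k m; omega
      rw [Finset.sum_congr rfl (fun m _ => by rw [hb m])]
      exact key_cnt h3 _ (fun m => by have := hab k m; omega) (hsum k hk)
    exact_mod_cast hkey
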